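/- Let Π = {(u₁,u₂,u₃) ∈ ℝ³ : u₁+u₂+u₃ = 0} and, for k ∈ {1,2,3} (subscripts read modulo 3), let C_k = {u ∈ Π : e^{u_k} = e^{u_{k+1}} − e^{u_{k+2}} or e^{u_k} = −(e^{u_{k+1}} − e^{u_{k+2}}), and u_k ≤ u_{k+1}, u_k ≤ u_{k+2}}. Let M ⊂ Π be a lattice of rank 2 and d(M) its covolume (the area of a fundamental domain of M in the plane Π with the Euclidean metric inherited from ℝ³). Suppose u and u' are distinct points of M both lying on the same piece C_k, and set t = −(√6/2)·u_k and t' = −(√6/2)·u'_k, where u_k, u'_k are the k-th coordinates of u, u'. If t' ≥ t, then t' ≥ √2·d(M)·exp(√6·t/2) / (1 + exp(−2(t'−t)·log 2/√6)). -/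

import Mathlib

open Real

lemma sum3 (x : Fin 3 → ℝ) (hx : x 0 + x 1 + x 2 = 0) (k : Fin 3) :
    x k + x (k + 1) + x (k + 2) = 0 := by
  fin_cases k <;> simp <;> linarith

lemma cover3 : ∀ k i : Fin 3, i = k ∨ i = k + 1 ∨ i = k + 2 := by decide

lemma det3 (v w : Fin 3 → ℝ) (hv : v 0 + v 1 + v 2 = 0) (hw : w 0 + w 1 + w 2 = 0)
    (k : Fin 3) :
    v k * (w (k + 1) - w (k + 2)) - w k * (v (k + 1) - v (k + 2)) =
      2 * (v 0 * w 1 - v 1 * w 0) := by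
  have hv2 : v 2 = -v 0 - v 1 := by linarith
  have hw2 : w 2 = -w 0 - w 1 := by linarith
  fin_cases k <;> simp <;> rw [hv2, hw2] <;> ring

lemma curveFacts (a b c : ℝ) (hs : a + b + c = 0)
    (h : exp a = exp b - exp c ∨ exp a = -(exp b - exp c))
    (hab : a ≤ b) (hac : a ≤ c) :
    a < 0 ∧ 2 * Real.sinh (|b - c| / 2) = exp (3 * a / 2) ∧ |b - c| ≤ exp (3 * a / 2) := by
  have hsinh : exp b - exp c = exp (-a / 2) * (2 * sinh ((b - c) / 2)) := by
    have e1 : exp b = exp (-a / 2) * exp ((b - c) / 2) := by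
      rw [← Real.exp_add]; congr 1; linarith
    have e2 : exp c = exp (-a / 2) * exp (-((b - c) / 2)) := by
      rw [← Real.exp_add]; congr 1; linarith
    rw [Real.sinh_eq, e1, e2]; ring
  have habs : |Real.sinh ((b - c) / 2)| = Real.sinh (|b - c| / 2) := by
    rcases le_total 0 (b - c) with h0 | h0
    · rw [abs_of_nonneg h0, abs_of_nonneg (Real.sinh_nonneg_iff.2 (by linarith))]
    · rw [abs_of_nonpos h0, abs_of_nonpos (Real.sinh_nonpos_iff.2 (by linarith)),
        show -(b - c) / 2 = -((b - c) / 2) by ring, Real.sinh_neg]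
  have hkey : exp a = exp (-a / 2) * (2 * sinh (|b - c| / 2)) := by
    rcases h with h | h
    · rw [h, hsinh, ← habs, abs_of_nonneg]
      nlinarith [Real.exp_pos a, h, hsinh, Real.exp_pos (-a/2)]
    · rw [show exp a = -(exp b - exp c) from h, hsinh, ← habs, abs_of_nonpos]
      · ring
      · nlinarith [Real.exp_pos a, h, hsinh, Real.exp_pos (-a/2)]
  have hsinhval : 2 * sinh (|b - c| / 2) = exp (3 * a / 2) := by
    have := Real.exp_pos (-a / 2)
    have hme : exp (-a/2) * exp (3*a/2) = exp a := by rw [← Real.exp_add]; ring_nf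
    nlinarith [hkey]
  have ha : a < 0 := by
    rcases lt_or_eq_of_le (show a ≤ 0 by linarith) with h0 | h0
    · exact h0
    · exfalso
      have hb : b = 0 := by linarith
      have hc : c = 0 := by linarith
      rw [h0, hb, hc] at hsinhval
      norm_num at hsinhval
  refine ⟨ha, hsinhval, ?_⟩
  have := Real.self_le_sinh_iff.2 (show (0:ℝ) ≤ |b - c| / 2 by positivity)
  linarith

lemma mainIneq (d t t' : ℝ) (ht : 0 < t) (htt' : t ≤ t')
    (h : Real.sqrt 2 * d * Real.exp (Real.sqrt 6 * t / 2) ≤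
      t' * (1 + Real.exp (-(Real.sqrt 6) * (t' - t) / 2))) :
    Real.sqrt 2 * d * Real.exp (Real.sqrt 6 * t / 2) /
      (1 + Real.exp (-2 * (t' - t) * Real.log 2 / Real.sqrt 6)) ≤ t' := by
  have ht'0 : 0 < t' := lt_of_lt_of_le ht htt'
  have h6 : 0 < Real.sqrt 6 := by positivity
  have h66 : Real.sqrt 6 * Real.sqrt 6 = 6 := Real.mul_self_sqrt (by norm_num)
  have hE : Real.exp (-(Real.sqrt 6) * (t' - t) / 2) ≤
      Real.exp (-2 * (t' - t) * Real.log 2 / Real.sqrt 6) := by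
    apply Real.exp_le_exp.mpr
    rw [div_le_div_iff₀ (by norm_num) h6]
    have hlog : Real.log 2 ≤ 1 := by
      have := Real.log_le_sub_one_of_pos (by norm_num : (0:ℝ) < 2); linarith
    have hlog0 : 0 ≤ Real.log 2 := Real.log_nonneg (by norm_num)
    nlinarith [mul_nonneg (sub_nonneg.2 htt') (sub_nonneg.2 hlog)]
  rw [div_le_iff₀ (by positivity)]
  nlinarith [mul_le_mul_of_nonneg_left hE ht'0.le]


set_option maxHeartbeats 1000000 in

theorem stmt9 (v w : Fin 3 → ℝ)
    -- v, w span a lattice M of rank 2 in the plane Π = {u₁+u₂+u₃ = 0}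
    (hv : v 0 + v 1 + v 2 = 0) (hw : w 0 + w 1 + w 2 = 0)
    (hind : LinearIndependent ℝ ![v, w])
    -- d is the covolume of M : the area of the fundamental parallelogram,
    -- i.e. the Euclidean norm of the cross product v × w
    (d : ℝ)
    (hd : d = Real.sqrt ((v 1 * w 2 - v 2 * w 1) ^ 2 + (v 2 * w 0 - v 0 * w 2) ^ 2 +
      (v 0 * w 1 - v 1 * w 0) ^ 2))
    (k : Fin 3) (u u' : Fin 3 → ℝ)
    -- u and u' are distinct points of M
    (hu : ∃ p q : ℤ, u = p • v + q • w) (hu' : ∃ p q : ℤ, u' = p • v + q • w)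
    (hne : u ≠ u')
    -- both lying on the piece C_k of the curve C
    (hC : (Real.exp (u k) = Real.exp (u (k + 1)) - Real.exp (u (k + 2)) ∨
        Real.exp (u k) = -(Real.exp (u (k + 1)) - Real.exp (u (k + 2)))) ∧
      u k ≤ u (k + 1) ∧ u k ≤ u (k + 2))
    (hC' : (Real.exp (u' k) = Real.exp (u' (k + 1)) - Real.exp (u' (k + 2)) ∨
        Real.exp (u' k) = -(Real.exp (u' (k + 1)) - Real.exp (u' (k + 2)))) ∧
      u' k ≤ u' (k + 1) ∧ u' k ≤ u' (k + 2))
    -- local coordinates t, t'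
    (t t' : ℝ) (ht : t = -(Real.sqrt 6 / 2) * u k) (ht' : t' = -(Real.sqrt 6 / 2) * u' k)
    (htt' : t ≤ t') :
    Real.sqrt 2 * d * Real.exp (Real.sqrt 6 * t / 2) /
      (1 + Real.exp (-2 * (t' - t) * Real.log 2 / Real.sqrt 6)) ≤ t' := by
  obtain ⟨p, q, hpq⟩ := hu
  obtain ⟨p', q', hpq'⟩ := hu'
  have hu3 : ∀ i, u i = (p : ℝ) * v i + (q : ℝ) * w i := by
    intro i; rw [hpq]; simp [Pi.add_apply, Pi.smul_apply, zsmul_eq_mul]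
  have hu3' : ∀ i, u' i = (p' : ℝ) * v i + (q' : ℝ) * w i := by
    intro i; rw [hpq']; simp [Pi.add_apply, Pi.smul_apply, zsmul_eq_mul]
  have hsumu : u k + u (k + 1) + u (k + 2) = 0 := by
    apply sum3
    rw [hu3 0, hu3 1, hu3 2]; linear_combination (p : ℝ) * hv + (q : ℝ) * hw
  have hsumu' : u' k + u' (k + 1) + u' (k + 2) = 0 := by
    apply sum3
    rw [hu3' 0, hu3' 1, hu3' 2]; linear_combination (p' : ℝ) * hv + (q' : ℝ) * hw
  obtain ⟨ha, hsv, habs⟩ := curveFacts _ _ _ hsumu hC.1 hC.2.1 hC.2.2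
  obtain ⟨ha', hsv', habs'⟩ := curveFacts _ _ _ hsumu' hC'.1 hC'.2.1 hC'.2.2
  have h6 : (0:ℝ) < Real.sqrt 6 := by positivity
  have h66 : Real.sqrt 6 * Real.sqrt 6 = 6 := Real.mul_self_sqrt (by norm_num)
  -- a' ≤ a
  have haa' : u' k ≤ u k := by nlinarith [htt', ht, ht']
  -- determinant relation
  set D : ℝ := v 0 * w 1 - v 1 * w 0 with hD
  have hdet : u k * (u' (k + 1) - u' (k + 2)) - u' k * (u (k + 1) - u (k + 2)) =
      ((p : ℝ) * q' - (p' : ℝ) * q) * (2 * D) := by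
    rw [hu3 k, hu3 (k + 1), hu3 (k + 2), hu3' k, hu3' (k + 1), hu3' (k + 2)]
    linear_combination ((p : ℝ) * q' - (p' : ℝ) * q) * det3 v w hv hw k
  have hdval : d = Real.sqrt 3 * |D| := by
    have e1 : v 1 * w 2 - v 2 * w 1 = D := by linear_combination (v 1) * hw - (w 1) * hv
    have e2 : v 2 * w 0 - v 0 * w 2 = D := by linear_combination (w 0) * hv - (v 0) * hw
    rw [hd, e1, e2, show D ^ 2 + D ^ 2 + D ^ 2 = 3 * D ^ 2 by ring,
      Real.sqrt_mul (by norm_num), Real.sqrt_sq_eq_abs]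
  by_cases hn : p * q' - p' * q = 0
  · -- dependent case : contradiction with u ≠ u'
    exfalso
    have hdet0 : u k * (u' (k + 1) - u' (k + 2)) = u' k * (u (k + 1) - u (k + 2)) := by
      have : ((p : ℝ) * q' - (p' : ℝ) * q) = 0 := by exact_mod_cast congrArg (Int.cast : ℤ → ℝ) hn
      rw [this] at hdet; linarith [hdet]
    set s : ℝ := u (k + 1) - u (k + 2) with hs
    set s' : ℝ := u' (k + 1) - u' (k + 2) with hs'
    have hE : |u k| * |s'| = |u' k| * |s| := by
      rw [← abs_mul, ← abs_mul, hdet0]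
    have hss' : |s| ≤ |s'| := by
      rw [abs_of_neg ha, abs_of_neg ha'] at hE
      nlinarith [abs_nonneg s, abs_nonneg s']
    have hsinh_le : Real.sinh (|s| / 2) ≤ Real.sinh (|s'| / 2) :=
      Real.sinh_le_sinh.2 (by linarith)
    have hexp_le : Real.exp (3 * u k / 2) ≤ Real.exp (3 * u' k / 2) := by
      rw [← hsv, ← hsv']; linarith
    have haeq : u k = u' k := le_antisymm (by
      have := Real.exp_le_exp.1 hexp_le; linarith) haa'
    have hseq : s = s' := by
      have : u k * s' = u k * s := by rw [hdet0, haeq]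
      have hk0 : u k ≠ 0 := ne_of_lt ha
      exact (mul_left_cancel₀ hk0 this).symm
    apply hne
    funext i
    rcases cover3 k i with hi | hi | hi <;> rw [hi]
    · exact haeq
    · linarith [hsumu, hsumu', haeq, hseq]
    · linarith [hsumu, hsumu', haeq, hseq]
  · -- independent case
    have h1n : (1 : ℝ) ≤ |((p : ℝ) * q' - (p' : ℝ) * q)| := by
      have : (1 : ℤ) ≤ |p * q' - p' * q| := Int.one_le_abs hn
      calc (1:ℝ) ≤ ((|p * q' - p' * q| : ℤ) : ℝ) := by exact_mod_cast this
        _ = |((p : ℝ) * q' - (p' : ℝ) * q)| := by push_cast; ring_nf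
    have hDabs : 2 * |D| ≤ |u k * (u' (k + 1) - u' (k + 2)) - u' k * (u (k + 1) - u (k + 2))| := by
      rw [hdet, abs_mul]
      have h2D : |2 * D| = 2 * |D| := by rw [abs_mul]; norm_num
      rw [h2D]
      nlinarith [mul_nonneg (sub_nonneg.2 h1n) (abs_nonneg D)]
    -- bound the determinant
    have hbound : |u k * (u' (k + 1) - u' (k + 2)) - u' k * (u (k + 1) - u (k + 2))| ≤
        (-(u' k)) * (Real.exp (3 * u k / 2) + Real.exp (3 * u' k / 2)) := by
      calc |u k * (u' (k + 1) - u' (k + 2)) - u' k * (u (k + 1) - u (k + 2))|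
          ≤ |u k * (u' (k + 1) - u' (k + 2))| + |u' k * (u (k + 1) - u (k + 2))| :=
            abs_sub _ _
        _ = |u k| * |u' (k + 1) - u' (k + 2)| + |u' k| * |u (k + 1) - u (k + 2)| := by
            rw [abs_mul, abs_mul]
        _ ≤ (-(u' k)) * Real.exp (3 * u' k / 2) + (-(u' k)) * Real.exp (3 * u k / 2) := by
            rw [abs_of_neg ha, abs_of_neg ha']
            have h1 : (-(u k)) * |u' (k + 1) - u' (k + 2)| ≤ (-(u' k)) * Real.exp (3 * u' k / 2) := by
              apply mul_le_mul (by linarith) habs' (abs_nonneg _) (by linarith)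
            have h2 : (-(u' k)) * |u (k + 1) - u (k + 2)| ≤ (-(u' k)) * Real.exp (3 * u k / 2) :=
              mul_le_mul_of_nonneg_left habs (by linarith)
            linarith
        _ = (-(u' k)) * (Real.exp (3 * u k / 2) + Real.exp (3 * u' k / 2)) := by ring
    have hdb : d ≤ (Real.sqrt 3 / 2) * ((-(u' k)) * (Real.exp (3 * u k / 2) + Real.exp (3 * u' k / 2))) := by
      rw [hdval]
      nlinarith [Real.sqrt_nonneg 3, hDabs, hbound]
    have ht0 : 0 < t := by rw [ht]; nlinarith
    apply mainIneq d t t' ht0 htt'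
    -- rewrite exponents
    have hexpt : Real.sqrt 6 * t / 2 = -(3 * u k / 2) := by
      rw [ht]; linear_combination (-(u k) / 4) * h66
    have hexpd : -(Real.sqrt 6) * (t' - t) / 2 = 3 * u' k / 2 - 3 * u k / 2 := by
      rw [ht, ht']; linear_combination ((u' k - u k) / 4) * h66
    rw [hexpt, hexpd, Real.exp_sub, Real.exp_neg]
    have h23 : Real.sqrt 2 * Real.sqrt 3 = Real.sqrt 6 := by
      rw [← Real.sqrt_mul (by norm_num)]; norm_num
    have hkey : Real.sqrt 2 * d ≤ t' * (Real.exp (3 * u k / 2) + Real.exp (3 * u' k / 2)) := by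
      have ht'eq : t' = Real.sqrt 6 / 2 * (-(u' k)) := by rw [ht']; ring
      have := mul_le_mul_of_nonneg_left hdb (Real.sqrt_nonneg 2)
      calc Real.sqrt 2 * d ≤ Real.sqrt 2 * ((Real.sqrt 3 / 2) * ((-(u' k)) * (Real.exp (3 * u k / 2) + Real.exp (3 * u' k / 2)))) := this
        _ = t' * (Real.exp (3 * u k / 2) + Real.exp (3 * u' k / 2)) := by
            rw [ht'eq]; linear_combination ((-(u' k)) * (Real.exp (3 * u k / 2) + Real.exp (3 * u' k / 2)) / 2) * h23
    have hep : (0:ℝ) < Real.exp (3 * u k / 2) := Real.exp_pos _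
    have h2 : t' * (1 + Real.exp (3 * u' k / 2) / Real.exp (3 * u k / 2))
        = t' * (Real.exp (3 * u k / 2) + Real.exp (3 * u' k / 2)) / Real.exp (3 * u k / 2) := by
      field_simp
    rw [h2, show Real.sqrt 2 * d * (Real.exp (3 * u k / 2))⁻¹
        = Real.sqrt 2 * d / Real.exp (3 * u k / 2) by ring,
      div_le_div_iff₀ hep hep]
    nlinarith [mul_le_mul_of_nonneg_right hkey hep.le]
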